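/- For all integers a, b, c, d, e, m: (P(d−a)·Q(e−b) − P(e−a)·Q(d−b))·P(m−c) = (P(d−c)·Q(e−b) − P(e−c)·Q(d−b))·P(m−a) + (P(d−a)·P(e−c) − P(e−a)·P(d−c))·Q(m−b). -/

import Mathlib

noncomputable section PellAux

private def pellα : ℝ := 1 + Real.sqrt 2
private def pellβ : ℝ := 1 - Real.sqrt 2

private lemma sqrt2_sq : Real.sqrt 2 * Real.sqrt 2 = 2 :=
  Real.mul_self_sqrt (by norm_num)

private lemma sqrt2_pos : (0:ℝ) < Real.sqrt 2 := Real.sqrt_pos.mpr (by norm_num)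

private lemma pellα_ne : pellα ≠ 0 := by
  unfold pellα; positivity

private lemma pellβ_ne : pellβ ≠ 0 := by
  unfold pellβ
  intro h
  have h2 : Real.sqrt 2 = 1 := by linarith
  have := sqrt2_sq
  rw [h2] at this; norm_num at this

private lemma sqrt2_ne : Real.sqrt 2 ≠ 0 := ne_of_gt sqrt2_pos

private lemma pellα_sq : pellα ^ 2 = 2 * pellα + 1 := by
  unfold pellα; ring_nf; nlinarith [sqrt2_sq]

private lemma pellβ_sq : pellβ ^ 2 = 2 * pellβ + 1 := by
  unfold pellβ; ring_nf; nlinarith [sqrt2_sq]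

private def pellp (n : ℤ) : ℝ := (pellα ^ n - pellβ ^ n) / (2 * Real.sqrt 2)
private def pellq (n : ℤ) : ℝ := pellα ^ n + pellβ ^ n - pellp n

private lemma zpow_rec {x : ℝ} (hx : x ≠ 0) (hsq : x ^ 2 = 2 * x + 1) (n : ℤ) :
    x ^ n = 2 * x ^ (n - 1) + x ^ (n - 2) := by
  have h1 : x ^ n = x ^ (n - 2) * x ^ 2 := by
    rw [← zpow_natCast x 2, ← zpow_add₀ hx]; norm_num
  have h2 : x ^ (n - 1) = x ^ (n - 2) * x := by
    rw [← zpow_add_one₀ hx]; ring_nf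
  rw [h1, h2, hsq]; ring

private lemma pellp_rec (n : ℤ) : pellp n = 2 * pellp (n - 1) + pellp (n - 2) := by
  unfold pellp
  rw [zpow_rec pellα_ne pellα_sq n, zpow_rec pellβ_ne pellβ_sq n]
  ring

private lemma pellq_rec (n : ℤ) : pellq n = 2 * pellq (n - 1) + pellq (n - 2) := by
  unfold pellq
  rw [zpow_rec pellα_ne pellα_sq n, zpow_rec pellβ_ne pellβ_sq n, pellp_rec n]
  ring

private lemma pellp0 : pellp 0 = 0 := by unfold pellp; simp

private lemma pellp1 : pellp 1 = 1 := by
  unfold pellp pellα pellβ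
  rw [zpow_one, zpow_one]
  field_simp
  ring

private lemma pellq0 : pellq 0 = 2 := by unfold pellq; rw [pellp0]; norm_num

private lemma pellq1 : pellq 1 = 1 := by
  unfold pellq
  rw [pellp1]
  unfold pellα pellβ
  rw [zpow_one, zpow_one]; ring

/-- Uniqueness of solutions of the recurrence. -/
private lemma rec_unique (f : ℤ → ℤ) (g : ℤ → ℝ)
    (hf : ∀ n : ℤ, f n = 2 * f (n - 1) + f (n - 2))
    (hg : ∀ n : ℤ, g n = 2 * g (n - 1) + g (n - 2))
    (h0 : (f 0 : ℝ) = g 0) (h1 : (f 1 : ℝ) = g 1) :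
    ∀ n : ℤ, (f n : ℝ) = g n := by
  have key : ∀ n : ℤ, (f n : ℝ) = g n ∧ (f (n + 1) : ℝ) = g (n + 1) := by
    intro n
    induction n using Int.induction_on with
    | zero => exact ⟨h0, h1⟩
    | succ k ih =>
      refine ⟨ih.2, ?_⟩
      have hfk := hf ((k:ℤ) + 2)
      have hgk := hg ((k:ℤ) + 2)
      rw [show ((k:ℤ) + 2) - 1 = (k:ℤ) + 1 from by ring,
        show ((k:ℤ) + 2) - 2 = (k:ℤ) from by ring] at hfk hgk
      rw [show ((k:ℤ) + 1 + 1) = (k:ℤ) + 2 from by ring, hgk, hfk]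
      push_cast
      rw [ih.1, ih.2]
    | pred k ih =>
      have hfk := hf (-(k:ℤ) + 1)
      have hgk := hg (-(k:ℤ) + 1)
      rw [show (-(k:ℤ) + 1) - 1 = -(k:ℤ) from by ring,
        show (-(k:ℤ) + 1) - 2 = -(k:ℤ) - 1 from by ring] at hfk hgk
      constructor
      · show (f (-(k:ℤ) - 1) : ℝ) = g (-(k:ℤ) - 1)
        have h1' : (f (-(k:ℤ) - 1) : ℝ) = (f (-(k:ℤ) + 1) : ℝ) - 2 * (f (-(k:ℤ)) : ℝ) := by
          have : f (-(k:ℤ) - 1) = f (-(k:ℤ) + 1) - 2 * f (-(k:ℤ)) := by linarith [hfk]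
          rw [this]; push_cast; ring
        have h2' : g (-(k:ℤ) - 1) = g (-(k:ℤ) + 1) - 2 * g (-(k:ℤ)) := by linarith [hgk]
        rw [h1', h2', ih.1, ih.2]
      · show (f (-(k:ℤ) - 1 + 1) : ℝ) = g (-(k:ℤ) - 1 + 1)
        rw [show (-(k:ℤ) - 1 + 1) = -(k:ℤ) from by ring]
        exact ih.1
  exact fun n => (key n).1

set_option maxHeartbeats 4000000 in
private lemma pell_key (a b c d e m : ℤ) :
    (pellp (d - a) * pellq (e - b) - pellp (e - a) * pellq (d - b)) * pellp (m - c)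
      = (pellp (d - c) * pellq (e - b) - pellp (e - c) * pellq (d - b)) * pellp (m - a)
        + (pellp (d - a) * pellp (e - c) - pellp (e - a) * pellp (d - c)) * pellq (m - b) := by
  unfold pellq pellp
  simp only [zpow_sub₀ pellα_ne, zpow_sub₀ pellβ_ne]
  have h1 := zpow_ne_zero a pellα_ne
  have h2 := zpow_ne_zero b pellα_ne
  have h3 := zpow_ne_zero c pellα_ne
  have h4 := zpow_ne_zero a pellβ_ne
  have h5 := zpow_ne_zero b pellβ_ne
  have h6 := zpow_ne_zero c pellβ_ne
  have h7 := sqrt2_ne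
  field_simp
  ring

end PellAux

/-- Identity for Pell and Pell–Lucas numbers extended to all integers. -/
theorem stmt_6 (P Q : ℤ → ℤ)
    (hP0 : P 0 = 0) (hP1 : P 1 = 1)
    (hP : ∀ n : ℤ, P n = 2 * P (n - 1) + P (n - 2))
    (hQ0 : Q 0 = 2) (hQ1 : Q 1 = 1)
    (hQ : ∀ n : ℤ, Q n = 2 * Q (n - 1) + Q (n - 2))
    (a b c d e m : ℤ) :
    (P (d - a) * Q (e - b) - P (e - a) * Q (d - b)) * P (m - c)
      = (P (d - c) * Q (e - b) - P (e - c) * Q (d - b)) * P (m - a)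
        + (P (d - a) * P (e - c) - P (e - a) * P (d - c)) * Q (m - b) := by
  have hPp : ∀ n : ℤ, (P n : ℝ) = pellp n :=
    rec_unique P pellp hP pellp_rec (by rw [hP0, pellp0]; norm_num)
      (by rw [hP1, pellp1]; norm_num)
  have hQq : ∀ n : ℤ, (Q n : ℝ) = pellq n :=
    rec_unique Q pellq hQ pellq_rec (by rw [hQ0, pellq0]; norm_num)
      (by rw [hQ1, pellq1]; norm_num)
  have key : ((P (d - a) * Q (e - b) - P (e - a) * Q (d - b)) * P (m - c) : ℝ)
      = ((P (d - c) * Q (e - b) - P (e - c) * Q (d - b)) * P (m - a)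
        + (P (d - a) * P (e - c) - P (e - a) * P (d - c)) * Q (m - b) : ℝ) := by
    simp only [hPp, hQq]
    exact pell_key a b c d e m
  exact_mod_cast key
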